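/- arXiv:2209.00488 — 5 statements merged into one kernel-verified Lean document; each statement's English description precedes it below -/
import Mathlib

section
/- The symmetric pairing ⟨p,q⟩ = Σ_{i=0}^{d} (-1)^i binom(d,i)^{-1} p_i q_{d-i} on pairs of polynomials of degree at most d is SL(2,ℤ)-invariant: for all γ in SL(2,ℤ) and polynomials p, q of degree at most d, ⟨γ.p, γ.q⟩ = ⟨p, q⟩, where γ acts by (sym^d)(γ)p = (-cX+a)^d p((dX-b)/(-cX+a)) for γ = (a b; c d). -/
open Polynomial Finset MeasureTheory

abbrev SL2Z := Matrix.SpecialLinearGroup (Fin 2) ℤ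

noncomputable def symAct (d : ℕ) (γ : SL2Z) (p : Polynomial ℂ) : Polynomial ℂ :=
  ∑ i ∈ Finset.range (d + 1), Polynomial.C (p.coeff i) *
    ((Polynomial.C ((γ.1 1 1 : ℤ) : ℂ) * Polynomial.X - Polynomial.C ((γ.1 0 1 : ℤ) : ℂ)) ^ i *
     (Polynomial.C ((γ.1 0 0 : ℤ) : ℂ) - Polynomial.C ((γ.1 1 0 : ℤ) : ℂ) * Polynomial.X) ^ (d - i))

noncomputable def pairing (d : ℕ) (p q : Polynomial ℂ) : ℂ :=
  ∑ i ∈ Finset.range (d + 1), (-1 : ℂ) ^ i * ((d.choose i : ℂ))⁻¹ * p.coeff i * q.coeff (d - i)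

def IsParabolicCocycle (d : ℕ) (φ : SL2Z → Polynomial ℂ) : Prop :=
  (∀ γ, (φ γ).natDegree ≤ d) ∧
  (∀ γ₁ γ₂, φ (γ₁ * γ₂) = symAct d γ₁ (φ γ₂) + φ γ₁) ∧
  φ ModularGroup.T = 0 ∧ φ (-1) = 0

/-- Auxiliary: a polynomial function vanishing everywhere has zero coefficients. -/
lemma aux_van {n : ℕ} {f : ℕ → ℂ} (h : ∀ s : ℂ, ∑ i ∈ range n, f i * s ^ i = 0) :
    ∀ i ∈ range n, f i = 0 := by
  have hP : (∑ i ∈ range n, C (f i) * X ^ i : Polynomial ℂ) = 0 := by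
    apply Polynomial.funext
    intro r
    simp only [Polynomial.eval_finset_sum, Polynomial.eval_mul, Polynomial.eval_C,
      Polynomial.eval_pow, Polynomial.eval_X, Polynomial.eval_zero]
    exact h r
  intro i hi
  have := congrArg (fun p => Polynomial.coeff p i) hP
  simpa [Polynomial.finset_sum_coeff, Polynomial.coeff_C_mul, Polynomial.coeff_X_pow,
    Finset.sum_ite_eq' (range n) i, hi] using this

lemma aux_van' {n : ℕ} {f : ℕ → ℂ} (h : ∀ s : ℂ, ∑ i ∈ range (n+1), f i * s ^ (n - i) = 0) :
    ∀ i ≤ n, f i = 0 := by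
  have h2 : ∀ s : ℂ, ∑ i ∈ range (n+1), f (n - i) * s ^ i = 0 := by
    intro s
    have := Finset.sum_range_reflect (fun i => f (n - i) * s ^ i) (n+1)
    rw [← this]
    rw [← h s]
    apply Finset.sum_congr rfl
    intro j hj
    simp only [Finset.mem_range] at hj
    congr 2
    omega
  intro i hi
  have := aux_van h2 (n - i) (Finset.mem_range.mpr (by omega))
  rwa [Nat.sub_sub_self hi] at this

lemma aux_bilin (d n m : ℕ) (c e : ℕ → ℂ) (u v : ℕ → Polynomial ℂ) :
    pairing d (∑ i ∈ range n, C (c i) * u i) (∑ j ∈ range m, C (e j) * v j)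
      = ∑ i ∈ range n, ∑ j ∈ range m, c i * e j * pairing d (u i) (v j) := by
  unfold pairing
  simp only [Polynomial.finset_sum_coeff, Polynomial.coeff_C_mul, Finset.mul_sum,
    Finset.sum_mul]
  rw [Finset.sum_comm]
  rw [show (∑ y ∈ range m, ∑ x ∈ range (d + 1), ∑ i ∈ range n,
        ((-1:ℂ)) ^ x * ((d.choose x:ℂ))⁻¹ * (c i * (u i).coeff x) * (e y * (v y).coeff (d - x)))
      = ∑ y ∈ range m, ∑ i ∈ range n, ∑ x ∈ range (d+1),
        ((-1:ℂ)) ^ x * ((d.choose x:ℂ))⁻¹ * (c i * (u i).coeff x) * (e y * (v y).coeff (d - x))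
    from Finset.sum_congr rfl fun y _ => Finset.sum_comm]
  rw [Finset.sum_comm]
  refine Finset.sum_congr rfl fun i _ => Finset.sum_congr rfl fun j _ =>
    Finset.sum_congr rfl fun k _ => ?_
  ring

lemma aux_linpow_expand (u v : ℂ) (d : ℕ) :
    ((C u * X + C v) ^ d : Polynomial ℂ)
      = ∑ k ∈ range (d + 1), C ((d.choose k : ℂ) * u ^ k * v ^ (d - k)) * X ^ k := by
  rw [add_pow]
  apply Finset.sum_congr rfl
  intro k _
  simp only [mul_pow, ← Polynomial.C_pow, Polynomial.C_mul, Polynomial.C_eq_natCast]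
  ring

lemma aux_linpow_coeff (u v : ℂ) (d k : ℕ) (hk : k ∈ range (d+1)) :
    ((C u * X + C v) ^ d : Polynomial ℂ).coeff k = (d.choose k : ℂ) * u ^ k * v ^ (d - k) := by
  rw [aux_linpow_expand]
  simp only [Polynomial.finset_sum_coeff, Polynomial.coeff_C_mul, Polynomial.coeff_X_pow]
  rw [Finset.sum_eq_single k]
  · simp
  · intro b _ hb
    simp [Ne.symm hb]
  · intro h; exact absurd hk h

lemma aux_pair_pow (d : ℕ) (u v u' v' : ℂ) :
    pairing d ((C u * X + C v) ^ d) ((C u' * X + C v') ^ d) = (v * u' - u * v') ^ d := by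
  have key : ∀ i ∈ range (d+1),
      (-1:ℂ)^i * ((d.choose i : ℂ))⁻¹ * ((C u * X + C v) ^ d).coeff i
        * ((C u' * X + C v') ^ d).coeff (d - i)
      = (-(u * v')) ^ i * (v * u') ^ (d - i) * (d.choose i : ℂ) := by
    intro i hi
    have hi' : i ≤ d := Nat.lt_succ_iff.mp (Finset.mem_range.mp hi)
    have hC : (d.choose i : ℂ) ≠ 0 := Nat.cast_ne_zero.mpr (Nat.choose_pos hi').ne'
    rw [aux_linpow_coeff u v d i hi,
      aux_linpow_coeff u' v' d (d - i) (Finset.mem_range.mpr (by omega)),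
      Nat.choose_symm hi', Nat.sub_sub_self hi', neg_pow, mul_pow]
    field_simp
    ring
  unfold pairing
  rw [Finset.sum_congr rfl key, show (v*u' - u*v') = (-(u*v') + v*u') by ring, add_pow]

lemma aux_symAct_linpow (d : ℕ) (γ : SL2Z) (u v : ℂ) :
    symAct d γ ((C u * X + C v) ^ d)
      = (C (u * ((γ.1 1 1 : ℤ) : ℂ) - v * ((γ.1 1 0 : ℤ) : ℂ)) * X
          + C (v * ((γ.1 0 0 : ℤ) : ℂ) - u * ((γ.1 0 1 : ℤ) : ℂ))) ^ d := by
  set a : ℂ := ((γ.1 0 0 : ℤ) : ℂ)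
  set b : ℂ := ((γ.1 0 1 : ℤ) : ℂ)
  set c : ℂ := ((γ.1 1 0 : ℤ) : ℂ)
  set d' : ℂ := ((γ.1 1 1 : ℤ) : ℂ)
  have hAB : (C (u * d' - v * c) * X + C (v * a - u * b) : Polynomial ℂ)
      = C u * (C d' * X - C b) + C v * (C a - C c * X) := by
    simp only [Polynomial.C_sub, Polynomial.C_mul]
    ring
  conv_rhs => rw [hAB, add_pow]
  unfold symAct
  apply Finset.sum_congr rfl
  intro i hi
  rw [aux_linpow_coeff u v d i hi]
  simp only [mul_pow, ← Polynomial.C_pow, Polynomial.C_mul, Polynomial.C_eq_natCast]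
  ring

theorem pairing_symAct_invariant (d : ℕ) (γ : SL2Z) (p q : Polynomial ℂ)
    (hp : p.natDegree ≤ d) (hq : q.natDegree ≤ d) :
    pairing d (symAct d γ p) (symAct d γ q) = pairing d p q := by
  set a : ℂ := ((γ.1 0 0 : ℤ) : ℂ) with ha
  set b : ℂ := ((γ.1 0 1 : ℤ) : ℂ) with hb
  set c : ℂ := ((γ.1 1 0 : ℤ) : ℂ) with hc
  set d' : ℂ := ((γ.1 1 1 : ℤ) : ℂ) with hd'
  have hdet : a * d' - b * c = 1 := by
    have h := γ.2
    rw [Matrix.det_fin_two] at h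
    have h2 : ((γ.1 0 0 * γ.1 1 1 - γ.1 0 1 * γ.1 1 0 : ℤ) : ℂ) = 1 := by
      rw [h]; norm_num
    push_cast at h2
    rw [ha, hb, hc, hd']
    linear_combination h2
  set W : ℕ → Polynomial ℂ := fun i => (C d' * X - C b) ^ i * (C a - C c * X) ^ (d - i) with hW
  have hsym : ∀ r : Polynomial ℂ, symAct d γ r = ∑ i ∈ range (d+1), C (r.coeff i) * W i := by
    intro r; rfl
  -- the key: pairing d (W i) (W j) = pairing d (X^i) (X^j) for i,j ≤ d
  have core : ∀ i ∈ range (d+1), ∀ j ∈ range (d+1),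
      pairing d (W i) (W j) = pairing d (X ^ i) (X ^ j) := by
    have main : ∀ s t : ℂ,
        ∑ i ∈ range (d+1), ∑ j ∈ range (d+1),
          ((d.choose i : ℂ) * 1 ^ i * s ^ (d - i)) * ((d.choose j : ℂ) * 1 ^ j * t ^ (d - j))
            * (pairing d (W i) (W j) - pairing d (X ^ i) (X ^ j)) = 0 := by
      intro s t
      have e1 : pairing d (symAct d γ ((C 1 * X + C s) ^ d)) (symAct d γ ((C 1 * X + C t) ^ d))
          = (s - t) ^ d := by
        rw [aux_symAct_linpow, aux_symAct_linpow, aux_pair_pow]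
        congr 1
        linear_combination (s - t) * hdet
      have e2 : pairing d ((C 1 * X + C s) ^ d) ((C 1 * X + C t) ^ d) = (s - t) ^ d := by
        rw [aux_pair_pow]; ring_nf
      have f1 : pairing d (symAct d γ ((C 1 * X + C s) ^ d)) (symAct d γ ((C 1 * X + C t) ^ d))
          = ∑ i ∈ range (d+1), ∑ j ∈ range (d+1),
            ((d.choose i : ℂ) * 1 ^ i * s ^ (d - i)) * ((d.choose j : ℂ) * 1 ^ j * t ^ (d - j))
              * pairing d (W i) (W j) := by
        rw [hsym, hsym, aux_bilin]
        refine Finset.sum_congr rfl fun i hi => Finset.sum_congr rfl fun j hj => ?_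
        rw [aux_linpow_coeff 1 s d i hi, aux_linpow_coeff 1 t d j hj]
      have f2 : pairing d ((C 1 * X + C s) ^ d) ((C 1 * X + C t) ^ d)
          = ∑ i ∈ range (d+1), ∑ j ∈ range (d+1),
            ((d.choose i : ℂ) * 1 ^ i * s ^ (d - i)) * ((d.choose j : ℂ) * 1 ^ j * t ^ (d - j))
              * pairing d (X ^ i) (X ^ j) := by
        conv_lhs => rw [aux_linpow_expand 1 s d, aux_linpow_expand 1 t d]
        rw [aux_bilin]
      have expand : ∑ i ∈ range (d+1), ∑ j ∈ range (d+1),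
          ((d.choose i : ℂ) * 1 ^ i * s ^ (d - i)) * ((d.choose j : ℂ) * 1 ^ j * t ^ (d - j))
            * (pairing d (W i) (W j) - pairing d (X ^ i) (X ^ j))
          = (∑ i ∈ range (d+1), ∑ j ∈ range (d+1),
              ((d.choose i : ℂ) * 1 ^ i * s ^ (d - i)) * ((d.choose j : ℂ) * 1 ^ j * t ^ (d - j))
                * pairing d (W i) (W j))
            - ∑ i ∈ range (d+1), ∑ j ∈ range (d+1),
                ((d.choose i : ℂ) * 1 ^ i * s ^ (d - i)) * ((d.choose j : ℂ) * 1 ^ j * t ^ (d - j))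
                  * pairing d (X ^ i) (X ^ j) := by
        rw [← Finset.sum_sub_distrib]
        refine Finset.sum_congr rfl fun i _ => ?_
        rw [← Finset.sum_sub_distrib]
        refine Finset.sum_congr rfl fun j _ => ?_
        ring
      rw [expand, ← f1, ← f2, e1, e2, sub_self]
    -- extraction
    intro i hi j hj
    have hi' : i ≤ d := Nat.lt_succ_iff.mp (Finset.mem_range.mp hi)
    have hj' : j ≤ d := Nat.lt_succ_iff.mp (Finset.mem_range.mp hj)
    have hCi : (d.choose i : ℂ) ≠ 0 := Nat.cast_ne_zero.mpr (Nat.choose_pos hi').ne'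
    have hCj : (d.choose j : ℂ) ≠ 0 := Nat.cast_ne_zero.mpr (Nat.choose_pos hj').ne'
    have step1 : ∀ t : ℂ, ∀ k ≤ d,
        (d.choose k : ℂ) * (∑ j ∈ range (d+1), (d.choose j : ℂ) * t ^ (d - j)
          * (pairing d (W k) (W j) - pairing d (X ^ k) (X ^ j))) = 0 := by
      intro t
      apply aux_van'
      intro s
      rw [← main s t]
      refine Finset.sum_congr rfl fun k _ => ?_
      rw [Finset.mul_sum, Finset.sum_mul]
      refine Finset.sum_congr rfl fun l _ => ?_
      ring
    have step2 : ∀ j ≤ d,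
        (d.choose j : ℂ) * (pairing d (W i) (W j) - pairing d (X ^ i) (X ^ j)) = 0 := by
      apply aux_van'
      intro t
      have h0 := step1 t i hi'
      rcases mul_eq_zero.mp h0 with h | h
      · exact absurd h hCi
      · rw [← h]
        refine Finset.sum_congr rfl fun l _ => ?_
        ring
    have h3 := step2 j hj'
    rcases mul_eq_zero.mp h3 with h | h
    · exact absurd h hCj
    · exact sub_eq_zero.mp h

  -- conclude
  rw [hsym p, hsym q, aux_bilin]
  conv_rhs => rw [p.as_sum_range' (d+1) (Nat.lt_succ_of_le hp),
    q.as_sum_range' (d+1) (Nat.lt_succ_of_le hq)]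
  simp only [← Polynomial.C_mul_X_pow_eq_monomial]
  rw [aux_bilin]
  exact Finset.sum_congr rfl fun i hi => Finset.sum_congr rfl fun j hj => by
    rw [core i hi j hj]
end

section
/- For every integer d ≥ 1, the sum Σ_{j=0}^{d} binom(d,j)^{-1} is at most 2 + 4/d. -/
lemma choose_mono_right_of_le_half {n a b : ℕ} (hab : a ≤ b) (hb : b ≤ n / 2) :
    n.choose a ≤ n.choose b := by
  induction b, hab using Nat.le_induction with
  | base => exact le_refl _
  | succ b hb' ih =>
    exact le_trans (ih (le_trans (Nat.le_succ b) hb))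
      (Nat.choose_le_succ_of_lt_half_left (lt_of_lt_of_le (Nat.lt_succ_self b) hb))

lemma choose_two_le {d j : ℕ} (h2 : 2 ≤ j) (hj : j ≤ d - 2) :
    d.choose 2 ≤ d.choose j := by
  have hjd : j ≤ d := le_trans hj (Nat.sub_le d 2)
  rcases le_or_gt j (d / 2) with h | h
  · exact choose_mono_right_of_le_half h2 h
  · rw [← Nat.choose_symm hjd]
    apply choose_mono_right_of_le_half
    · omega
    · omega

theorem sum_inv_choose_le (d : ℕ) (hd : 1 ≤ d) :
    ∑ j ∈ Finset.range (d + 1), ((d.choose j : ℝ))⁻¹ ≤ 2 + 4 / (d : ℝ) := by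
  match d, hd with
  | 1, _ => norm_num [Finset.sum_range_succ]
  | 2, _ => norm_num [Finset.sum_range_succ]
  | 3, _ => norm_num [Finset.sum_range_succ]
  | (m + 4), _ =>
    set d := m + 4 with hdset
    have hd0 : (0:ℝ) < d := by positivity
    have hd1 : (0:ℝ) < (d:ℝ) - 1 := by
      have : (4:ℝ) ≤ d := by exact_mod_cast Nat.le_add_left 4 m
      linarith
    -- peel off last two and first two terms
    rw [show d + 1 = (m + 3) + 1 + 1 from rfl, Finset.sum_range_succ, Finset.sum_range_succ,
      show m + 3 = (m + 1) + 1 + 1 from rfl, Finset.sum_range_succ', Finset.sum_range_succ']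
    have hc0 : d.choose 0 = 1 := Nat.choose_zero_right d
    have hc1 : d.choose 1 = d := Nat.choose_one_right d
    have hcd : d.choose (m + 4) = 1 := Nat.choose_self d
    have hcd1 : d.choose (m + 3) = d := by
      have : d.choose (d - 1) = d.choose 1 := Nat.choose_symm (by omega)
      have e : d - 1 = m + 3 := by omega
      rw [e, hc1] at this; exact this
    -- bound middle sum
    have hmid : ∑ i ∈ Finset.range (m + 1), ((d.choose (i + 1 + 1) : ℝ))⁻¹
        ≤ (m + 1) * (2 / ((d:ℝ) * ((d:ℝ) - 1))) := by
      have hbound : ∀ i ∈ Finset.range (m + 1),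
          ((d.choose (i + 1 + 1) : ℝ))⁻¹ ≤ 2 / ((d:ℝ) * ((d:ℝ) - 1)) := by
        intro i hi
        rw [Finset.mem_range] at hi
        have h2le : d.choose 2 ≤ d.choose (i + 1 + 1) := choose_two_le (by omega) (by omega)
        have hc2 : (d.choose 2 : ℝ) = (d:ℝ) * ((d:ℝ) - 1) / 2 := by
          rw [Nat.choose_two_right]
          have : (d * (d - 1) / 2 : ℕ) = d * (d-1) / 2 := rfl
          rw [Nat.cast_div (by exact Nat.even_mul_pred_self d |>.two_dvd) (by norm_num)]
          push_cast [Nat.cast_sub (by omega : 1 ≤ d)]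
          ring
        have hpos : (0:ℝ) < d.choose 2 := by rw [hc2]; positivity
        rw [inv_le_comm₀ (by exact_mod_cast Nat.lt_of_lt_of_le (by exact_mod_cast hpos) h2le) (by positivity)]
        calc ((2 / ((d:ℝ) * ((d:ℝ) - 1)))⁻¹) = (d.choose 2 : ℝ) := by rw [hc2]; field_simp
          _ ≤ (d.choose (i + 1 + 1) : ℝ) := by exact_mod_cast h2le
      calc ∑ i ∈ Finset.range (m + 1), ((d.choose (i + 1 + 1) : ℝ))⁻¹
          ≤ ∑ i ∈ Finset.range (m + 1), 2 / ((d:ℝ) * ((d:ℝ) - 1)) :=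
            Finset.sum_le_sum hbound
        _ = (m + 1) * (2 / ((d:ℝ) * ((d:ℝ) - 1))) := by
            rw [Finset.sum_const, Finset.card_range]; push_cast; ring
    have key : (m + 1 : ℝ) * (2 / ((d:ℝ) * ((d:ℝ) - 1))) ≤ 2 / (d:ℝ) := by
      rw [show (m + 1 : ℝ) * (2 / ((d:ℝ) * ((d:ℝ) - 1))) = (2*((m:ℝ)+1)) / ((d:ℝ) * ((d:ℝ) - 1)) from by ring,
        div_le_div_iff₀ (by positivity) hd0]
      have hm : (m : ℝ) + 1 ≤ (d:ℝ) - 1 := by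
        have : ((m:ℝ) + 4) = (d:ℝ) := by exact_mod_cast rfl
        linarith
      nlinarith
    rw [hc0, hc1, hcd, hcd1]
    simp only [Nat.cast_one, inv_one]
    have : ∑ i ∈ Finset.range (m + 1), ((d.choose (i + 1 + 1) : ℝ))⁻¹ ≤ 2 / (d:ℝ) :=
      le_trans hmid key
    have hinv : ((d:ℝ))⁻¹ = 1 / (d:ℝ) := (one_div _).symm
    rw [hinv]
    have h4 : 2 / (d:ℝ) + 1/(d:ℝ) + 1/(d:ℝ) ≤ 4 / (d:ℝ) := by
      rw [← add_div, ← add_div]; apply div_le_div_of_nonneg_right <;> linarith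
    linarith
end

section
/- In the double quotient (1+S)\ℂ[SL(2,ℤ)/±I]/(1+S) of the group ring of SL(2,ℤ), the element T⁻¹ - 1 + T is congruent to -(1 + U + U⁻¹), where U = TS. More precisely, there exist elements A, B ∈ ℂ[SL(2,ℤ)] such that T⁻¹ - 1 + T + U⁻¹ + 1 + U = (1+S)·A + B·(1+S) in ℂ[SL(2,ℤ)/±I]. -/
def pmSub : Subgroup SL2Z := Subgroup.zpowers (-1)

instance pmSub_normal : pmSub.Normal := by
  constructor
  intro n hn g
  obtain ⟨k, rfl⟩ := hn
  have hc : Commute g (-1 : SL2Z) := by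
    show g * (-1) = (-1) * g
    apply Subtype.ext
    show (g : Matrix (Fin 2) (Fin 2) ℤ) * (((-1 : SL2Z) : Matrix (Fin 2) (Fin 2) ℤ))
        = (((-1 : SL2Z) : Matrix (Fin 2) (Fin 2) ℤ)) * (g : Matrix (Fin 2) (Fin 2) ℤ)
    simp
  have h2 : g * (-1 : SL2Z) ^ k * g⁻¹ = (-1 : SL2Z) ^ k := by
    rw [(hc.zpow_right k).eq]
    exact mul_inv_cancel_right _ _
  rw [h2]
  exact Subgroup.zpow_mem_zpowers _ _

noncomputable def toQuot : MonoidAlgebra ℂ SL2Z →+* MonoidAlgebra ℂ (SL2Z ⧸ pmSub) :=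
  MonoidAlgebra.mapDomainRingHom ℂ (QuotientGroup.mk' pmSub)

theorem groupRing_double_coset_identity :
    ∃ A B : MonoidAlgebra ℂ SL2Z,
      toQuot ((MonoidAlgebra.of ℂ SL2Z) ModularGroup.T⁻¹ - 1
          + (MonoidAlgebra.of ℂ SL2Z) ModularGroup.T
          + (MonoidAlgebra.of ℂ SL2Z) (ModularGroup.T * ModularGroup.S)⁻¹ + 1
          + (MonoidAlgebra.of ℂ SL2Z) (ModularGroup.T * ModularGroup.S))
        = toQuot ((1 + (MonoidAlgebra.of ℂ SL2Z) ModularGroup.S) * A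
            + B * (1 + (MonoidAlgebra.of ℂ SL2Z) ModularGroup.S)) := by
  refine ⟨(MonoidAlgebra.of ℂ SL2Z) ModularGroup.T⁻¹,
    (MonoidAlgebra.of ℂ SL2Z) ModularGroup.T, ?_⟩
  have hmat : (ModularGroup.T * ModularGroup.S)⁻¹
      = (-1) * (ModularGroup.S * ModularGroup.T⁻¹) := by
    ext i j
    fin_cases i <;> fin_cases j <;>
      simp [ModularGroup.T, ModularGroup.S, Matrix.SpecialLinearGroup.SL2_inv_expl,
        Matrix.mul_apply, Matrix.vecMul, Matrix.vecHead, Matrix.vecTail,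
        dotProduct, Fin.sum_univ_succ] <;> rfl
  have hneg : QuotientGroup.mk' pmSub (-1 : SL2Z) = 1 := by
    rw [QuotientGroup.mk'_apply, QuotientGroup.eq_one_iff]
    exact Subgroup.mem_zpowers _
  have hq : QuotientGroup.mk' pmSub ((ModularGroup.T * ModularGroup.S)⁻¹)
      = QuotientGroup.mk' pmSub (ModularGroup.S * ModularGroup.T⁻¹) := by
    rw [hmat, map_mul, hneg, one_mul]
  have hof : ∀ g : SL2Z, toQuot ((MonoidAlgebra.of ℂ SL2Z) g)
      = (MonoidAlgebra.of ℂ (SL2Z ⧸ pmSub)) (QuotientGroup.mk' pmSub g) := by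
    intro g
    simp [toQuot, MonoidAlgebra.mapDomainRingHom, MonoidAlgebra.of_apply,
      Finsupp.mapDomain_single]
  simp only [map_add, map_sub, map_mul, map_one, hof, hq]
  noncomm_ring
end

section
/- Let d ≥ 0 be even and e = X^d - 1 ∈ ℂ[X]_d. Then (1+S).e = 0 and (1+U+U²).e = 0 under the sym^d(X)-action (so e ∈ W_d), and ⟨⟨e, q⟩⟩ = 0 for every q ∈ W_d, where W_d = {v ∈ ℂ[X]_d : (1+S).v = 0 and (1+U+U²).v = 0}. -/
open Polynomial Finset MeasureTheory

lemma symAct_e (d : ℕ) (γ : SL2Z) :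
    symAct d γ (X ^ d - 1 : Polynomial ℂ) =
      (C ((γ.1 1 1 : ℤ) : ℂ) * X - C ((γ.1 0 1 : ℤ) : ℂ)) ^ d -
      (C ((γ.1 0 0 : ℤ) : ℂ) - C ((γ.1 1 0 : ℤ) : ℂ) * X) ^ d := by
  unfold symAct
  simp only [coeff_sub, coeff_X_pow, coeff_one, C_sub, sub_mul, apply_ite (Polynomial.C),
    map_one, map_zero, ite_mul, one_mul, zero_mul]
  rw [Finset.sum_sub_distrib, Finset.sum_ite_eq' (Finset.range (d+1)) d,
    Finset.sum_ite_eq' (Finset.range (d+1)) 0]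
  simp
lemma coe_TS : (ModularGroup.T * ModularGroup.S).1 = !![1, -1; 1, 0] := by
  simp [Matrix.SpecialLinearGroup.coe_mul, ModularGroup.coe_S, ModularGroup.coe_T,
    Matrix.mul_fin_two]
lemma coe_TSTS : ((ModularGroup.T * ModularGroup.S) * (ModularGroup.T * ModularGroup.S)).1
    = !![0, -1; 1, -1] := by
  rw [Matrix.SpecialLinearGroup.coe_mul, coe_TS, Matrix.mul_fin_two]
  norm_num
lemma neg_one_pow_sub {d i : ℕ} (hd : Even d) (hi : i ≤ d) :
    ((-1 : ℂ)) ^ (d - i) = (-1) ^ i := by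
  have h : ((-1 : ℂ)) ^ (d - i) * (-1) ^ i = 1 := by
    rw [← pow_add, Nat.sub_add_cancel hi]; exact hd.neg_one_pow
  have h2 : ((-1 : ℂ)) ^ i * (-1) ^ i = 1 := by
    rw [← pow_add]; exact Even.neg_one_pow (⟨i, rfl⟩ : Even (i + i))
  exact mul_right_cancel₀ (pow_ne_zero i (by norm_num)) (h.trans h2.symm)
lemma sum_zero_pow (d : ℕ) (q : Polynomial ℂ) :
    ∑ i ∈ Finset.range (d + 1), q.coeff i * 0 ^ (d - i) = q.coeff d := by
  rw [Finset.sum_eq_single d]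
  · simp
  · intro b hb hbd
    simp only [Finset.mem_range] at hb
    rw [zero_pow (by omega), mul_zero]
  · intro h
    exact absurd (Finset.self_mem_range_succ d) h
lemma sum_coeff_eval_one {d : ℕ} {q : Polynomial ℂ} (hq : q.natDegree ≤ d) :
    ∑ i ∈ Finset.range (d + 1), q.coeff i = q.eval 1 := by
  rw [eval_eq_sum_range' (Nat.lt_succ_of_le hq)]
  simp
lemma sum_coeff_eval_neg_one {d : ℕ} {q : Polynomial ℂ} (hd : Even d) (hq : q.natDegree ≤ d) :
    ∑ i ∈ Finset.range (d + 1), q.coeff i * (-1) ^ (d - i) = q.eval (-1) := by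
  rw [eval_eq_sum_range' (Nat.lt_succ_of_le hq)]
  refine Finset.sum_congr rfl fun i hi => ?_
  rw [neg_one_pow_sub hd (by simpa using Nat.lt_succ_iff.mp (Finset.mem_range.mp hi)), mul_comm]

theorem e_in_W_and_orthogonal (d : ℕ) (hd : Even d) :
    ((Polynomial.X ^ d - 1 : Polynomial ℂ)
        + symAct d ModularGroup.S (Polynomial.X ^ d - 1) = 0) ∧
    ((Polynomial.X ^ d - 1 : Polynomial ℂ)
        + symAct d (ModularGroup.T * ModularGroup.S) (Polynomial.X ^ d - 1)
        + symAct d ((ModularGroup.T * ModularGroup.S) * (ModularGroup.T * ModularGroup.S))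
            (Polynomial.X ^ d - 1) = 0) ∧
    (∀ q : Polynomial ℂ, q.natDegree ≤ d →
      q + symAct d ModularGroup.S q = 0 →
      q + symAct d (ModularGroup.T * ModularGroup.S) q
        + symAct d ((ModularGroup.T * ModularGroup.S) * (ModularGroup.T * ModularGroup.S)) q = 0 →
      pairing d
        (symAct d ModularGroup.T⁻¹ (Polynomial.X ^ d - 1)
          - symAct d ModularGroup.T (Polynomial.X ^ d - 1)) q = 0) := by
  refine ⟨?_, ?_, ?_⟩
  · rw [symAct_e, ModularGroup.coe_S]
    norm_num
    rw [hd.neg_pow, sub_self]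
  · rw [symAct_e, symAct_e, coe_TS, coe_TSTS]
    norm_num
    rw [hd.neg_pow]
    ring
  · intro q hq hS hU
    have h1 := congrArg (Polynomial.eval (1:ℂ)) hS
    have h0 := congrArg (Polynomial.eval (0:ℂ)) hS
    have h2 := congrArg (Polynomial.eval (0:ℂ)) hU
    simp only [symAct, ModularGroup.coe_S, coe_TS, coe_TSTS, eval_add, eval_finset_sum, eval_mul,
      eval_pow, eval_sub, eval_C, eval_X, eval_zero] at h1 h0 h2
    norm_num at h1 h0 h2
    rw [sum_coeff_eval_neg_one hd hq] at h1
    rw [sum_zero_pow] at h0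
    rw [sum_coeff_eval_one hq, sum_zero_pow] at h2
    have hA : q.eval 1 = 0 := by linear_combination h2 - h0
    have hB : q.eval (-1) = 0 := by linear_combination h1 - h2 + h0
    have hp : symAct d ModularGroup.T⁻¹ (X ^ d - 1 : Polynomial ℂ)
        - symAct d ModularGroup.T (X ^ d - 1) = (X + 1) ^ d - (X + C (-1)) ^ d := by
      rw [symAct_e, symAct_e, ModularGroup.coe_T, ModularGroup.coe_T_inv]
      norm_num
      ring
    rw [hp]
    unfold pairing
    have key : ∀ i ∈ Finset.range (d + 1),
        (-1 : ℂ) ^ i * ((d.choose i : ℂ))⁻¹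
          * (((X + 1) ^ d - (X + C (-1)) ^ d : Polynomial ℂ).coeff i)
          * q.coeff (d - i) = ((-1 : ℂ) ^ i - 1) * q.coeff (d - i) := by
      intro i hi
      have hi' : i ≤ d := Nat.lt_succ_iff.mp (Finset.mem_range.mp hi)
      have hc : ((d.choose i : ℂ)) ≠ 0 := by
        exact_mod_cast Nat.cast_ne_zero.mpr (Nat.choose_pos hi').ne'
      have h2 : ((-1 : ℂ)) ^ i * (-1) ^ i = 1 := by
        rw [← pow_add]; exact Even.neg_one_pow (⟨i, rfl⟩ : Even (i + i))
      rw [coeff_sub, coeff_X_add_one_pow, coeff_X_add_C_pow, neg_one_pow_sub hd hi']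
      field_simp
      linear_combination (-q.coeff (d - i)) * h2
    rw [Finset.sum_congr rfl key]
    have hrefl : ∑ i ∈ Finset.range (d + 1), ((-1 : ℂ) ^ i - 1) * q.coeff (d - i)
        = ∑ i ∈ Finset.range (d + 1), ((-1 : ℂ) ^ i - 1) * q.coeff i := by
      rw [← Finset.sum_range_reflect (fun i => ((-1 : ℂ) ^ i - 1) * q.coeff i) (d + 1)]
      refine Finset.sum_congr rfl fun i hi => ?_
      have hi' : i ≤ d := Nat.lt_succ_iff.mp (Finset.mem_range.mp hi)
      simp only [Nat.add_sub_cancel]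
      rw [neg_one_pow_sub hd hi']
    rw [hrefl]
    have hfin : ∑ i ∈ Finset.range (d + 1), ((-1 : ℂ) ^ i - 1) * q.coeff i
        = q.eval (-1) - q.eval 1 := by
      rw [← sum_coeff_eval_one hq, ← sum_coeff_eval_neg_one hd hq, ← Finset.sum_sub_distrib]
      refine Finset.sum_congr rfl fun i hi => ?_
      have hi' : i ≤ d := Nat.lt_succ_iff.mp (Finset.mem_range.mp hi)
      rw [neg_one_pow_sub hd hi']
      ring
    rw [hfin, hA, hB, sub_zero]
end

section
/- Let ψ : SL(2,ℤ) → ℂ satisfy ψ(γ₁γ₂) = ψ(γ₁) + ψ(γ₂) + φ₂^∨(γ₁)(φ₁(γ₂)) for parabolic (1, sym^d(X))-cocycles φ₁, φ₂, and set δ_{-1} = I, δ_i = T^{β_i} S δ_{i-1} for a sequence of integers β_0, …, β_l. Then ψ(δ_l) = Σ_{i=0}^{l} φ₂^∨(S)(φ₁(δ_{i-1}) - ½φ₁(S)), where φ₂^∨(S)(v) = ⟨φ₂(S⁻¹), v⟩. -/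
open Polynomial Finset MeasureTheory

lemma symAct_zero (d : ℕ) (γ : SL2Z) : symAct d γ 0 = 0 := by
  simp [symAct]

lemma symAct_one (d : ℕ) (p : Polynomial ℂ) (hp : p.natDegree ≤ d) : symAct d 1 p = p := by
  have h : ((1 : SL2Z) : Matrix (Fin 2) (Fin 2) ℤ) = 1 := rfl
  simp only [symAct, h, Matrix.one_apply_eq, Matrix.one_apply_ne (by decide : (1:Fin 2) ≠ 0),
    Matrix.one_apply_ne (by decide : (0:Fin 2) ≠ 1)]
  simp only [Int.cast_one, Int.cast_zero, map_zero, map_one, one_mul, sub_zero, mul_zero,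
    one_pow, mul_one]
  conv_rhs => rw [Polynomial.as_sum_range' p (d+1) (Nat.lt_succ_of_le hp)]
  exact Finset.sum_congr rfl fun i _ => by simp [Polynomial.C_mul_X_pow_eq_monomial]

lemma pairing_zero_right (d : ℕ) (p : Polynomial ℂ) : pairing d p 0 = 0 := by simp [pairing]

lemma pairing_zero_left (d : ℕ) (q : Polynomial ℂ) : pairing d 0 q = 0 := by simp [pairing]

lemma pairing_sub_smul (d : ℕ) (p q r : Polynomial ℂ) (c : ℂ) :
    pairing d p (q - c • r) = pairing d p q - c * pairing d p r := by
  simp only [pairing, Polynomial.coeff_sub, Polynomial.coeff_smul, smul_eq_mul,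
    Finset.mul_sum, ← Finset.sum_sub_distrib]
  exact Finset.sum_congr rfl fun i _ => by ring

lemma phi_one {d : ℕ} {φ : SL2Z → Polynomial ℂ} (h : IsParabolicCocycle d φ) : φ 1 = 0 := by
  have h' := h.2.1 1 1
  rw [one_mul, symAct_one d _ (h.1 1)] at h'
  exact right_eq_add.mp h'

lemma phi_T_inv {d : ℕ} {φ : SL2Z → Polynomial ℂ} (h : IsParabolicCocycle d φ) :
    φ ModularGroup.T⁻¹ = 0 := by
  have h' := h.2.1 ModularGroup.T⁻¹ ModularGroup.T
  rw [inv_mul_cancel, phi_one h, h.2.2.1, symAct_zero, zero_add] at h'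
  exact h'.symm

lemma phi_T_zpow {d : ℕ} {φ : SL2Z → Polynomial ℂ} (h : IsParabolicCocycle d φ) (n : ℤ) :
    φ (ModularGroup.T ^ n) = 0 := by
  induction n using Int.induction_on with
  | zero => simpa using phi_one h
  | succ k ih => rw [zpow_add_one, h.2.1, h.2.2.1, symAct_zero, ih, add_zero]
  | pred k ih => rw [zpow_sub_one, h.2.1, phi_T_inv h, symAct_zero, ih, add_zero]

theorem psi_continued_fraction_sum (d : ℕ) (hd : Even d) (φ₁ φ₂ : SL2Z → Polynomial ℂ)
    (h1 : IsParabolicCocycle d φ₁) (h2 : IsParabolicCocycle d φ₂) (ψ : SL2Z → ℂ)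
    (hψ : ∀ γ₁ γ₂ : SL2Z, ψ (γ₁ * γ₂) = ψ γ₁ + ψ γ₂ + pairing d (φ₂ γ₁⁻¹) (φ₁ γ₂))
    (hT : ψ ModularGroup.T = 0)
    (hS : ψ ModularGroup.S
      = -(1/2 : ℂ) * pairing d (φ₂ ModularGroup.S⁻¹) (φ₁ ModularGroup.S))
    (l : ℕ) (β : ℕ → ℤ) (δ : ℕ → SL2Z)
    (hδ0 : δ 0 = ModularGroup.T ^ (β 0) * ModularGroup.S)
    (hδ : ∀ i, 1 ≤ i → i ≤ l → δ i = ModularGroup.T ^ (β i) * ModularGroup.S * δ (i - 1)) :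
    ψ (δ l) = ∑ i ∈ Finset.range (l + 1),
      pairing d (φ₂ ModularGroup.S⁻¹)
        ((if i = 0 then 0 else φ₁ (δ (i - 1))) - (2 : ℂ)⁻¹ • φ₁ ModularGroup.S) := by
  have hφ2Tz : ∀ n : ℤ, φ₂ ((ModularGroup.T ^ n)⁻¹) = 0 := fun n => by
    rw [← zpow_neg]; exact phi_T_zpow h2 _
  have hψ1 : ψ 1 = 0 := by
    have h' := hψ 1 1
    rw [one_mul, inv_one, phi_one h2, pairing_zero_left, add_zero] at h'
    exact right_eq_add.mp h'
  have hψTinv : ψ ModularGroup.T⁻¹ = 0 := by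
    have h' := hψ ModularGroup.T⁻¹ ModularGroup.T
    rw [inv_mul_cancel, hψ1, hT, h1.2.2.1, pairing_zero_right, add_zero, add_zero] at h'
    exact h'.symm
  have hψTz : ∀ n : ℤ, ψ (ModularGroup.T ^ n) = 0 := by
    intro n
    induction n using Int.induction_on with
    | zero => simpa using hψ1
    | succ k ih => rw [zpow_add_one, hψ, ih, hT, h1.2.2.1, pairing_zero_right]; ring
    | pred k ih => rw [zpow_sub_one, hψ, ih, hψTinv, phi_T_inv h1, pairing_zero_right]; ring
  have key0 : ψ (δ 0) = pairing d (φ₂ ModularGroup.S⁻¹)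
      ((0 : Polynomial ℂ) - (2 : ℂ)⁻¹ • φ₁ ModularGroup.S) := by
    rw [hδ0, hψ, hψTz, hφ2Tz, pairing_zero_left, hS, pairing_sub_smul, pairing_zero_right]
    ring
  have step : ∀ m, 1 ≤ m → m ≤ l → ψ (δ m) = ψ (δ (m - 1)) +
      pairing d (φ₂ ModularGroup.S⁻¹)
        (φ₁ (δ (m - 1)) - (2 : ℂ)⁻¹ • φ₁ ModularGroup.S) := by
    intro m hm hml
    rw [hδ m hm hml, mul_assoc, hψ, hψTz, hφ2Tz, pairing_zero_left, hψ, hS,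
      pairing_sub_smul]
    ring
  suffices H : ∀ m, m ≤ l → ψ (δ m) = ∑ i ∈ Finset.range (m + 1),
      pairing d (φ₂ ModularGroup.S⁻¹)
        ((if i = 0 then 0 else φ₁ (δ (i - 1))) - (2 : ℂ)⁻¹ • φ₁ ModularGroup.S) from
    H l le_rfl
  intro m
  induction m with
  | zero => intro _; rw [Finset.sum_range_one]; simpa using key0
  | succ m ih =>
    intro hml
    rw [Finset.sum_range_succ, ← ih (by omega)]
    have hstep := step (m + 1) (by omega) hml
    simp only [Nat.add_sub_cancel] at hstep
    rw [hstep]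
    simp
end
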